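/- For N ≥ 4, the space of quadratic, energy-preserving, shift-equivariant, 1-localized maps G : R^N → R^N is two-dimensional, spanned by G₁ and G̃₁, where G₁(x)_0 = x₁² − x₀x_{−1} and G̃₁(x)_0 = x_{−1}² − x₀x₁ (extended equivariantly to all components). -/

import Mathlib

/-- `IsGood N G` says `G : R^N → R^N` is quadratic (i.e. `G = (1/2) B(x,x)` for a symmetric
bilinear `B`), energy-preserving, equivariant under the cyclic left shift, and 1-localized
(each component `G(x)_i` depends only on `x_{i-1}, x_i, x_{i+1}`). -/
def IsGood (N : ℕ) [NeZero N] (G : (ZMod N → ℝ) → ZMod N → ℝ) : Prop :=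
  (∃ B : (ZMod N → ℝ) → (ZMod N → ℝ) → ZMod N → ℝ,
      (∀ x y, B x y = B y x) ∧
      (∀ x y z, B (x + y) z = B x z + B y z) ∧
      (∀ (a : ℝ) (x y), B (a • x) y = a • B x y) ∧
      (∀ x, G x = fun i => (1 / 2 : ℝ) * B x x i)) ∧
  (∀ x : ZMod N → ℝ, ∑ i : ZMod N, x i * G x i = 0) ∧
  (∀ (x : ZMod N → ℝ) (i : ZMod N), G (fun j => x (j + 1)) i = G x (i + 1)) ∧
  (∀ (x y : ZMod N → ℝ) (i : ZMod N),
      x (i - 1) = y (i - 1) → x i = y i → x (i + 1) = y (i + 1) → G x i = G y i)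

/-- For `N ≥ 4` the space of quadratic, energy-preserving, shift-equivariant, 1-localized
maps on `R^N` is two-dimensional, spanned by `G₁(x)_i = x_{i+1}² − x_i x_{i−1}` and
`G̃₁(x)_i = x_{i−1}² − x_i x_{i+1}`. -/
lemma zmod_cast_ne_zero (N k : ℕ) (hk : 0 < k) (hkN : k < N) : ((k : ℕ) : ZMod N) ≠ 0 := by
  haveI : NeZero N := ⟨by omega⟩
  intro h
  have hd : N ∣ k := (ZMod.natCast_eq_zero_iff k N).mp h
  have := Nat.le_of_dvd hk hd
  omega

def ind (N : ℕ) (j : ZMod N) : ZMod N → ℝ := fun k => if k = j then 1 else 0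

lemma classification (N : ℕ) (hN : 4 ≤ N) [NeZero N]
    (G : (ZMod N → ℝ) → ZMod N → ℝ) (hGood : IsGood N G) :
    ∃ a b : ℝ, ∀ (x : ZMod N → ℝ) (i : ZMod N),
      G x i = a * (x (i + 1) ^ 2 - x i * x (i - 1))
            + b * (x (i - 1) ^ 2 - x i * x (i + 1)) := by
  obtain ⟨⟨B, hBsymm, hBadd, hBsmul, hGB⟩, hE, hEq, hLoc⟩ := hGood
  -- arithmetic facts in ZMod N
  have k1 : (1 : ZMod N) ≠ 0 := by
    have := zmod_cast_ne_zero N 1 (by norm_num) (by omega); simpa using this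
  have k2 : (2 : ZMod N) ≠ 0 := by
    have := zmod_cast_ne_zero N 2 (by norm_num) (by omega); simpa using this
  have k3 : (3 : ZMod N) ≠ 0 := by
    have := zmod_cast_ne_zero N 3 (by norm_num) (by omega); simpa using this
  have nzc : ∀ u v : ZMod N,
      (u - v = 1 ∨ u - v = -1 ∨ u - v = 2 ∨ u - v = -2 ∨ u - v = 3 ∨ u - v = -3) →
      u ≠ v := by
    intro u v hc he
    rw [he, sub_self] at hc
    rcases hc with h | h | h | h | h | h
    · exact k1 h.symm
    · exact k1 (by linear_combination h)
    · exact k2 h.symm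
    · exact k2 (by linear_combination h)
    · exact k3 h.symm
    · exact k3 (by linear_combination h)
  have n_m2m1 : (-2 : ZMod N) ≠ -1 := nzc _ _ (.inr (.inl (by ring)))
  have n_m20 : (-2 : ZMod N) ≠ 0 := nzc _ _ (.inr (.inr (.inr (.inl (by ring)))))
  have n_m21 : (-2 : ZMod N) ≠ 1 := nzc _ _ (.inr (.inr (.inr (.inr (.inr (by ring))))))
  have n_m10 : (-1 : ZMod N) ≠ 0 := nzc _ _ (.inr (.inl (by ring)))
  have n_m11 : (-1 : ZMod N) ≠ 1 := nzc _ _ (.inr (.inr (.inr (.inl (by ring)))))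
  have n_0m1 : (0 : ZMod N) ≠ -1 := nzc _ _ (.inl (by ring))
  have n_01 : (0 : ZMod N) ≠ 1 := nzc _ _ (.inr (.inl (by ring)))
  have n_1m1 : (1 : ZMod N) ≠ -1 := nzc _ _ (.inr (.inr (.inl (by ring))))
  have n_2m1 : (2 : ZMod N) ≠ -1 := nzc _ _ (.inr (.inr (.inr (.inr (.inl (by ring))))))
  have n_21 : (2 : ZMod N) ≠ 1 := nzc _ _ (.inl (by ring))
  have n_110 : (1 : ZMod N) + 1 ≠ 0 := by rw [show (1:ZMod N)+1 = 2 by ring]; exact k2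
  have n_111 : (1 : ZMod N) + 1 ≠ 1 := by rw [show (1:ZMod N)+1 = 2 by ring]; exact n_21
  have n_m1s0 : (-1 : ZMod N) - 1 ≠ 0 := by rw [show (-1:ZMod N)-1 = -2 by ring]; exact n_m20
  have n_m1s1 : (-1 : ZMod N) - 1 ≠ 1 := by rw [show (-1:ZMod N)-1 = -2 by ring]; exact n_m21
  have n_m1sm1 : (-1 : ZMod N) - 1 ≠ -1 := by rw [show (-1:ZMod N)-1 = -2 by ring]; exact n_m2m1
  -- scalar bilinear form at component 0
  have hbsymm : ∀ x y, B x y 0 = B y x 0 := fun x y => congrFun (hBsymm x y) 0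
  have hbaddl : ∀ x y z, B (x + y) z 0 = B x z 0 + B y z 0 := fun x y z => by
    rw [hBadd]; rfl
  have hbsmull : ∀ (a : ℝ) x y, B (a • x) y 0 = a * B x y 0 := fun a x y => by
    rw [hBsmul]; rfl
  have hbaddr : ∀ x y z, B x (y + z) 0 = B x y 0 + B x z 0 := fun x y z => by
    rw [hbsymm, hbaddl, hbsymm y x, hbsymm z x]
  have hbsmulr : ∀ (a : ℝ) x y, B x (a • y) 0 = a * B x y 0 := fun a x y => by
    rw [hbsymm, hbsmull, hbsymm y x]
  have hG0 : ∀ x, G x 0 = (1/2 : ℝ) * B x x 0 := fun x => by rw [hGB]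
  -- the quadratic form at component 0
  obtain ⟨cA, cB, cC, cD, cE, cF, hq0⟩ :
      ∃ cA cB cC cD cE cF : ℝ, ∀ x : ZMod N → ℝ, G x 0 =
        cA * x (-1) ^ 2 + cB * x 0 ^ 2 + cC * x 1 ^ 2
        + cD * (x (-1) * x 0) + cE * (x 0 * x 1) + cF * (x (-1) * x 1) := by
    refine ⟨G (ind N (-1)) 0, G (ind N 0) 0, G (ind N 1) 0,
      B (ind N (-1)) (ind N 0) 0, B (ind N 0) (ind N 1) 0,
      B (ind N (-1)) (ind N 1) 0, ?_⟩
    intro x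
    have hagree : G x 0
        = G (x (-1) • ind N (-1) + x 0 • ind N 0 + x 1 • ind N 1) 0 := by
      apply hLoc
      · simp [ind, n_m10, n_m11]
      · simp [ind, n_01, n_0m1]
      · simp [ind, n_1m1, k1]
    rw [hagree, hG0]
    simp only [hbaddl, hbaddr, hbsmull, hbsmulr]
    rw [hG0 (ind N (-1)), hG0 (ind N 0), hG0 (ind N 1)]
    rw [hbsymm (ind N 0) (ind N (-1)), hbsymm (ind N 1) (ind N (-1)),
      hbsymm (ind N 1) (ind N 0)]
    ring
  -- the quadratic form at every component, via equivariance
  have hshift : ∀ (m : ℕ) (x : ZMod N → ℝ) (i : ZMod N),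
      G x (i + (m : ZMod N)) = G (fun j => x (j + (m : ZMod N))) i := by
    intro m
    induction m with
    | zero => intro x i; simp
    | succ m ih =>
      intro x i
      have h1 : i + ((m + 1 : ℕ) : ZMod N) = (i + 1) + (m : ℕ) := by push_cast; ring
      rw [h1, ih, ← hEq]
      have h2 : (fun j : ZMod N => x (j + 1 + (m : ZMod N)))
          = (fun j : ZMod N => x (j + ((m + 1 : ℕ) : ZMod N))) := by
        funext j; congr 1; push_cast; ring
      exact congrFun (congrArg G h2) i
  have hqi : ∀ (x : ZMod N → ℝ) (i : ZMod N), G x i =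
      cA * x (i - 1) ^ 2 + cB * x i ^ 2 + cC * x (i + 1) ^ 2
      + cD * (x (i - 1) * x i) + cE * (x i * x (i + 1))
      + cF * (x (i - 1) * x (i + 1)) := by
    intro x i
    have hv : ((i.val : ℕ) : ZMod N) = i := ZMod.natCast_rightInverse i
    have h0 := hshift i.val x 0
    rw [zero_add, hv] at h0
    rw [h0, hq0]
    rw [show (-1 : ZMod N) + i = i - 1 by ring, show (0 : ZMod N) + i = i by ring,
      show (1 : ZMod N) + i = i + 1 by ring]
  -- test vectors
  have hS1 : cB = 0 := by
    have h := hE (ind N 0)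
    have hsum : ∑ i : ZMod N, ind N 0 i * G (ind N 0) i
        = ind N 0 0 * G (ind N 0) 0 := by
      apply Finset.sum_eq_single
      · intro i _ hne; simp [ind, hne]
      · intro habs; exact absurd (Finset.mem_univ 0) habs
    rw [hsum, hqi] at h
    simp [ind, n_m10, k1] at h
    linarith
  have n_11m1 : (1 : ZMod N) + 1 ≠ -1 := by
    rw [show (1:ZMod N)+1 = 2 by ring]; exact n_2m1
  have hS2 : ∀ s : ℝ,
      cB + cC * s ^ 2 + cE * s + s * cA + s ^ 3 * cB + s ^ 2 * cD = 0 := by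
    intro s
    set x : ZMod N → ℝ := fun k => ind N 0 k + s * ind N 1 k with hx
    have h := hE x
    have hzero : ∀ i : ZMod N, i ≠ 0 → i ≠ 1 → x i = 0 := by
      intro i h0 h1; simp [hx, ind, h0, h1]
    have hsum : ∑ i : ZMod N, x i * G x i
        = ∑ i ∈ ({0, 1} : Finset (ZMod N)), x i * G x i := by
      symm
      apply Finset.sum_subset (Finset.subset_univ _)
      intro i _ hi
      simp only [Finset.mem_insert, Finset.mem_singleton, not_or] at hi
      rw [hzero i hi.1 hi.2, zero_mul]
    rw [hsum, Finset.sum_pair n_01, hqi, hqi] at h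
    simp [hx, ind, n_m10, n_m11, n_01, k1, n_1m1, n_110, n_111] at h
    linear_combination h
  have hS4 : (cB + cC + cE) + (cA + cB + cC + cD + cE + cF) + (cA + cB + cD) = 0 := by
    set x : ZMod N → ℝ := fun k => ind N (-1) k + ind N 0 k + ind N 1 k with hx
    have h := hE x
    have hzero : ∀ i : ZMod N, i ≠ -1 → i ≠ 0 → i ≠ 1 → x i = 0 := by
      intro i hm h0 h1; simp [hx, ind, hm, h0, h1]
    have hsum : ∑ i : ZMod N, x i * G x i
        = ∑ i ∈ ({-1, 0, 1} : Finset (ZMod N)), x i * G x i := by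
      symm
      apply Finset.sum_subset (Finset.subset_univ _)
      intro i _ hi
      simp only [Finset.mem_insert, Finset.mem_singleton, not_or] at hi
      rw [hzero i hi.1 hi.2.1 hi.2.2, zero_mul]
    have hnm : (-1 : ZMod N) ∉ ({0, 1} : Finset (ZMod N)) := by
      simp [n_m10, n_m11]
    rw [hsum, Finset.sum_insert hnm, Finset.sum_pair n_01, hqi, hqi, hqi] at h
    simp [hx, ind, n_m10, n_m11, n_01, n_0m1, k1, n_1m1, n_110, n_111, n_11m1,
      n_m1s0, n_m1s1, n_m1sm1] at h
    linear_combination h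
  have eD : cD = -cC := by linear_combination (hS2 1) / 2 + (hS2 (-1)) / 2 - hS1
  have eE : cE = -cA := by linear_combination (hS2 1) / 2 - (hS2 (-1)) / 2 - hS1
  have eF : cF = 0 := by linear_combination hS4 - 3 * hS1 - 2 * eD - 2 * eE
  refine ⟨cC, cA, ?_⟩
  intro x i
  rw [hqi]
  linear_combination (x i) ^ 2 * hS1 + (x (i - 1) * x i) * eD
    + (x i * x (i + 1)) * eE + (x (i - 1) * x (i + 1)) * eF

lemma isGood_G1 (N : ℕ) [NeZero N] :
    IsGood N (fun x i => x (i + 1) ^ 2 - x i * x (i - 1)) := by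
  refine ⟨⟨fun x y i => 2 * x (i+1) * y (i+1) - x i * y (i-1) - y i * x (i-1),
      ?_, ?_, ?_, ?_⟩, ?_, ?_, ?_⟩
  · intro x y; funext i; ring
  · intro x y z; funext i; simp only [Pi.add_apply]; ring
  · intro a x y; funext i; simp only [Pi.smul_apply, smul_eq_mul]; ring
  · intro x; funext i; ring
  · intro x
    have key : ∑ i : ZMod N, x i * x (i+1) ^ 2 = ∑ i : ZMod N, x (i-1) * x i ^ 2 := by
      apply Fintype.sum_equiv (Equiv.addRight (1 : ZMod N))
      intro i; simp
    calc ∑ i : ZMod N, x i * (x (i+1) ^ 2 - x i * x (i-1))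
        = ∑ i : ZMod N, (x i * x (i+1) ^ 2 - x (i-1) * x i ^ 2) := by
          apply Finset.sum_congr rfl; intro i _; ring
      _ = ∑ i : ZMod N, x i * x (i+1) ^ 2 - ∑ i : ZMod N, x (i-1) * x i ^ 2 :=
          Finset.sum_sub_distrib _ _
      _ = 0 := by rw [key, sub_self]
  · intro x i
    show x (i+1+1) ^ 2 - x (i+1) * x (i-1+1) = x (i+1+1) ^ 2 - x (i+1) * x (i+1-1)
    rw [show i - 1 + 1 = i + 1 - 1 by ring]
  · intro x y i h1 h2 h3
    show x (i+1) ^ 2 - x i * x (i-1) = y (i+1) ^ 2 - y i * y (i-1)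
    rw [h1, h2, h3]

lemma isGood_G2 (N : ℕ) [NeZero N] :
    IsGood N (fun x i => x (i - 1) ^ 2 - x i * x (i + 1)) := by
  refine ⟨⟨fun x y i => 2 * x (i-1) * y (i-1) - x i * y (i+1) - y i * x (i+1),
      ?_, ?_, ?_, ?_⟩, ?_, ?_, ?_⟩
  · intro x y; funext i; ring
  · intro x y z; funext i; simp only [Pi.add_apply]; ring
  · intro a x y; funext i; simp only [Pi.smul_apply, smul_eq_mul]; ring
  · intro x; funext i; ring
  · intro x
    have key : ∑ i : ZMod N, x i * x (i-1) ^ 2 = ∑ i : ZMod N, x (i+1) * x i ^ 2 := by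
      apply Fintype.sum_equiv (Equiv.subRight (1 : ZMod N))
      intro i; simp
    calc ∑ i : ZMod N, x i * (x (i-1) ^ 2 - x i * x (i+1))
        = ∑ i : ZMod N, (x i * x (i-1) ^ 2 - x (i+1) * x i ^ 2) := by
          apply Finset.sum_congr rfl; intro i _; ring
      _ = ∑ i : ZMod N, x i * x (i-1) ^ 2 - ∑ i : ZMod N, x (i+1) * x i ^ 2 :=
          Finset.sum_sub_distrib _ _
      _ = 0 := by rw [key, sub_self]
  · intro x i
    show x (i-1+1) ^ 2 - x (i+1) * x (i+1+1) = x (i+1-1) ^ 2 - x (i+1) * x (i+1+1)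
    rw [show i - 1 + 1 = i + 1 - 1 by ring]
  · intro x y i h1 h2 h3
    show x (i-1) ^ 2 - x i * x (i+1) = y (i-1) ^ 2 - y i * y (i+1)
    rw [h1, h2, h3]

theorem one_localized_classification (N : ℕ) (hN : 4 ≤ N) [NeZero N] :
    IsGood N (fun x i => x (i + 1) ^ 2 - x i * x (i - 1)) ∧
    IsGood N (fun x i => x (i - 1) ^ 2 - x i * x (i + 1)) ∧
    (∀ G : (ZMod N → ℝ) → ZMod N → ℝ, IsGood N G →
      ∃ a b : ℝ, ∀ (x : ZMod N → ℝ) (i : ZMod N),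
        G x i = a * (x (i + 1) ^ 2 - x i * x (i - 1))
              + b * (x (i - 1) ^ 2 - x i * x (i + 1))) ∧
    (∀ a b : ℝ,
      (∀ (x : ZMod N → ℝ) (i : ZMod N),
        a * (x (i + 1) ^ 2 - x i * x (i - 1))
          + b * (x (i - 1) ^ 2 - x i * x (i + 1)) = 0) → a = 0 ∧ b = 0) := by
  refine ⟨isGood_G1 N, isGood_G2 N, fun G hG => classification N hN G hG, ?_⟩
  intro a b h
  have k1 : (1 : ZMod N) ≠ 0 := by
    have := zmod_cast_ne_zero N 1 (by norm_num) (by omega); simpa using this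
  have k2 : (2 : ZMod N) ≠ 0 := by
    have := zmod_cast_ne_zero N 2 (by norm_num) (by omega); simpa using this
  have key : ∀ u v : ZMod N, u - v ≠ 0 → u ≠ v := by
    intro u v hne hb; exact hne (by rw [hb, sub_self])
  have h01 : (0 : ZMod N) ≠ 1 := key _ _
    (by rw [show (0:ZMod N) - 1 = -1 by ring]; intro hc; exact k1 (by linear_combination -hc))
  have hm11 : (-1 : ZMod N) ≠ 1 := key _ _
    (by rw [show (-1:ZMod N) - 1 = -2 by ring]; intro hc; exact k2 (by linear_combination -hc))
  have h0m1 : (0 : ZMod N) ≠ -1 := key _ _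
    (by rw [show (0:ZMod N) - (-1) = 1 by ring]; exact k1)
  have h1m1 : (1 : ZMod N) ≠ -1 := fun hc => hm11 hc.symm
  constructor
  · have := h (ind N 1) 0
    simp [ind, h01, hm11] at this
    linarith
  · have := h (ind N (-1)) 0
    simp [ind, h1m1, h0m1] at this
    linarith
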